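/- If X is a reflexive Banach space whose dual X* is locally uniformly rotund, then the pair (X, 𝕂) has property L_{p,o}. -/

import Mathlib

/-- The pair `(X, Y)` has property `L_{o,p}`: for every `ε > 0` and `x ∈ S_X` there is
`η(ε, x) > 0` such that any norm-one operator `T` with `‖T x‖ > 1 - η` attains its norm at a
point `x₀ ∈ S_X` with `‖x₀ - x‖ < ε`. -/
def HasLop (𝕜 X Y : Type*) [RCLike 𝕜] [NormedAddCommGroup X] [NormedSpace 𝕜 X]
    [NormedAddCommGroup Y] [NormedSpace 𝕜 Y] : Prop :=
  ∀ ε : ℝ, 0 < ε → ∀ x : X, ‖x‖ = 1 →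
    ∃ η : ℝ, 0 < η ∧ ∀ T : X →L[𝕜] Y, ‖T‖ = 1 → 1 - η < ‖T x‖ →
      ∃ x₀ : X, ‖x₀‖ = 1 ∧ ‖T x₀‖ = 1 ∧ ‖x₀ - x‖ < ε

/-- The pair `(X, Y)` has property `L_{p,o}`: for every `ε > 0` and norm-one operator `T` there
is `η(ε, T) > 0` such that whenever `x ∈ S_X` satisfies `‖T x‖ > 1 - η`, there is a norm-one
operator `S` attaining its norm at `x` with `‖S - T‖ < ε`. -/
def HasLpo (𝕜 X Y : Type*) [RCLike 𝕜] [NormedAddCommGroup X] [NormedSpace 𝕜 X]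
    [NormedAddCommGroup Y] [NormedSpace 𝕜 Y] : Prop :=
  ∀ ε : ℝ, 0 < ε → ∀ T : X →L[𝕜] Y, ‖T‖ = 1 →
    ∃ η : ℝ, 0 < η ∧ ∀ x : X, ‖x‖ = 1 → 1 - η < ‖T x‖ →
      ∃ S : X →L[𝕜] Y, ‖S‖ = 1 ∧ ‖S x‖ = 1 ∧ ‖S - T‖ < ε

/-- If  is a reflexive Banach space whose dual is locally uniformly rotund,
then the pair  has property . -/
theorem lpo_of_reflexive_of_dual_lur (𝕜 X : Type*) [RCLike 𝕜] [NormedAddCommGroup X]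
    [NormedSpace 𝕜 X] [CompleteSpace X]
    (hrefl : Function.Surjective (NormedSpace.inclusionInDoubleDual 𝕜 X))
    (hLUR : ∀ f : X →L[𝕜] 𝕜, ‖f‖ = 1 → ∀ fn : ℕ → X →L[𝕜] 𝕜, (∀ n, ‖fn n‖ = 1) →
      Filter.Tendsto (fun n => ‖fn n + f‖) Filter.atTop (nhds 2) →
      Filter.Tendsto (fun n => ‖fn n - f‖) Filter.atTop (nhds 0)) :
    HasLpo 𝕜 X 𝕜 := by
  intro ε hε T hT
  by_contra hcon
  push_neg at hcon
  choose x hx1 hx2 hx3 using fun n : ℕ => hcon (1/(n+1)) (by positivity)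
  have hxne : ∀ n, x n ≠ 0 := by
    intro n h0
    have := hx1 n
    rw [h0, norm_zero] at this
    norm_num at this
  choose g hg1 hg2 using fun n => exists_dual_vector 𝕜 (x n) (norm_ne_zero_iff.mpr (hxne n))
  have hcnorm : ∀ n : ℕ, (0:ℝ) < ‖T (x n)‖ := by
    intro n
    have h2 := hx2 n
    have h1 : (1:ℝ)/(n+1) ≤ 1 := by
      rw [div_le_one (by positivity)]
      have : (0:ℝ) ≤ (n:ℝ) := Nat.cast_nonneg n
      linarith
    linarith
  set S : ℕ → X →L[𝕜] 𝕜 := fun n => ((T (x n)) / ((‖T (x n)‖ : ℝ) : 𝕜)) • g n with hS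
  have hθ : ∀ n, ‖(T (x n) / ((‖T (x n)‖ : ℝ) : 𝕜))‖ = 1 := by
    intro n
    rw [norm_div, RCLike.norm_ofReal, abs_of_pos (hcnorm n),
      div_self (hcnorm n).ne']
  have hSnorm : ∀ n, ‖S n‖ = 1 := by
    intro n
    show ‖(T (x n) / ((‖T (x n)‖ : ℝ) : 𝕜)) • g n‖ = 1
    rw [norm_smul (T (x n) / ((‖T (x n)‖ : ℝ) : 𝕜)) (g n), hθ n, hg1 n, mul_one]
  have hgx : ∀ n, g n (x n) = 1 := by
    intro n
    rw [hg2 n, hx1 n]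
    norm_num
  have hSx : ∀ n, ‖(S n) (x n)‖ = 1 := by
    intro n
    simp only [hS, ContinuousLinearMap.smul_apply, hgx n, smul_eq_mul, mul_one]
    exact hθ n
  have key : ∀ n, ‖(S n + T) (x n)‖ = 1 + ‖T (x n)‖ := by
    intro n
    have h1 : (S n + T) (x n) = T (x n) / ((‖T (x n)‖ : ℝ) : 𝕜) + T (x n) := by
      simp [hS, hgx n]
    rw [h1]
    set c := T (x n) with hc
    have hr : ((‖c‖ : ℝ) : 𝕜) ≠ 0 := by
      simpa using (hcnorm n).ne'
    have h2 : c / ((‖c‖ : ℝ) : 𝕜) + c = (((1 + ‖c‖)/‖c‖ : ℝ) : 𝕜) * c := by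
      push_cast
      field_simp
    rw [h2, norm_mul, RCLike.norm_ofReal,
      abs_of_pos (div_pos (by positivity) (hcnorm n))]
    rw [div_mul_eq_mul_div, mul_div_assoc, div_self (hcnorm n).ne', mul_one]
  have hlow : Filter.Tendsto (fun n : ℕ => 2 - 1/((n:ℝ)+1)) Filter.atTop (nhds 2) := by
    have h := tendsto_one_div_add_atTop_nhds_zero_nat (𝕜 := ℝ)
    have := Filter.Tendsto.sub (tendsto_const_nhds (x := (2:ℝ)) (f := Filter.atTop (α := ℕ))) h
    simpa using this
  have htend2 : Filter.Tendsto (fun n => ‖S n + T‖) Filter.atTop (nhds 2) := by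
    apply tendsto_of_tendsto_of_tendsto_of_le_of_le hlow tendsto_const_nhds
    · intro n
      have hb : ‖(S n + T) (x n)‖ ≤ ‖S n + T‖ :=
        (S n + T).unit_le_opNorm (x n) (le_of_eq (hx1 n))
      rw [key n] at hb
      have := hx2 n
      simp only [one_div] at this ⊢
      linarith
    · intro n
      calc ‖S n + T‖ ≤ ‖S n‖ + ‖T‖ := norm_add_le _ _
        _ = 2 := by rw [hSnorm n, hT]; norm_num
  have hdiff := hLUR T hT S hSnorm htend2
  have hge : ε ≤ 0 := ge_of_tendsto hdiff
    (Filter.Eventually.of_forall fun n => hx3 n (S n) (hSnorm n) (hSx n))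
  linarith
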